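/- Let μ₁, …, μ_n be Borel probability measures on ℝ and let P be a Borel probability measure on ℝⁿ whose i-th coordinate marginal equals μ_i for each i. If there is a monotone Borel set M ⊆ ℝⁿ with P(M) = 1, then P = π*_n, the quantile coupling of μ₁, …, μ_n. -/

import Mathlib

open MeasureTheory

/-- The quantile function of a probability measure `μ` on `ℝ`:
`quantile μ x = inf {y : μ((-∞, y]) ≥ x}`. -/
noncomputable def quantile (μ : Measure ℝ) (x : ℝ) : ℝ :=
  sInf {y : ℝ | x ≤ (μ (Set.Iic y)).toReal}

/-- The quantile coupling `π*_n` of probability measures `μ₁,…,μ_n` on `ℝ`: the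
push-forward of Lebesgue measure on `(0,1)` under `x ↦ (q₁(x),…,q_n(x))`. -/
noncomputable def quantileCoupling {n : ℕ} (μ : Fin n → Measure ℝ) :
    Measure (Fin n → ℝ) :=
  ((volume : Measure ℝ).restrict (Set.Ioo 0 1)).map (fun x i => quantile (μ i) x)

open Set Filter ProbabilityTheory

section QuantileAux

variable {μ : Measure ℝ} [IsProbabilityMeasure μ]

lemma quantile_set_eq (x : ℝ) :
    {y : ℝ | x ≤ (μ (Set.Iic y)).toReal} = {y : ℝ | x ≤ cdf μ y} := by
  ext y; simp [cdf_eq_real, measureReal_def]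

lemma quantile_set_nonempty {x : ℝ} (hx : x < 1) :
    {y : ℝ | x ≤ (μ (Set.Iic y)).toReal}.Nonempty := by
  rw [quantile_set_eq]
  have h := (tendsto_cdf_atTop μ).eventually (lt_mem_nhds hx)
  obtain ⟨y, hy⟩ := h.exists
  exact ⟨y, hy.le⟩

lemma quantile_set_bddBelow {x : ℝ} (hx : 0 < x) :
    BddBelow {y : ℝ | x ≤ (μ (Set.Iic y)).toReal} := by
  rw [quantile_set_eq]
  have h := (tendsto_cdf_atBot μ).eventually (gt_mem_nhds hx)
  obtain ⟨z, hz⟩ := h.exists_forall_of_atBot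
  refine ⟨z, fun y hy => ?_⟩
  by_contra hzy
  exact absurd (le_trans hy ((monotone_cdf μ) (le_of_lt (not_le.mp hzy)))) (not_le.mpr (hz z le_rfl))

lemma quantile_le_iff {x : ℝ} (hx : x ∈ Set.Ioo (0:ℝ) 1) (a : ℝ) :
    quantile μ x ≤ a ↔ x ≤ (μ (Set.Iic a)).toReal := by
  constructor
  · intro h
    rw [← measureReal_def, ← cdf_eq_real]
    have key : ∀ b, a < b → x ≤ cdf μ b := by
      intro b hb
      have h1 : sInf {y : ℝ | x ≤ (μ (Set.Iic y)).toReal} < b := lt_of_le_of_lt h hb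
      rw [csInf_lt_iff (quantile_set_bddBelow hx.1) (quantile_set_nonempty hx.2)] at h1
      obtain ⟨y, hy, hyb⟩ := h1
      rw [quantile_set_eq] at hy
      exact le_trans hy ((monotone_cdf μ) hyb.le)
    have htendsto : Filter.Tendsto (cdf μ) (nhdsWithin a (Set.Ioi a)) (nhds (cdf μ a)) :=
      ((cdf μ).right_continuous a).mono_left (nhdsWithin_mono _ Set.Ioi_subset_Ici_self)
    exact ge_of_tendsto htendsto (eventually_nhdsWithin_of_forall fun b hb => key b hb)
  · intro h
    exact csInf_le (quantile_set_bddBelow hx.1) h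

lemma quantile_monotoneOn : MonotoneOn (quantile μ) (Set.Ioo (0:ℝ) 1) := by
  intro x hx y hy hxy
  refine csInf_le_csInf (quantile_set_bddBelow hx.1) (quantile_set_nonempty hy.2)
    (fun z hz => le_trans hxy hz)

end QuantileAux

lemma exists_subset_all {α : Type*} {n : ℕ} [Nonempty (Fin n)] (g : Fin n → Set α)
    (hcomp : ∀ i k, g i ⊆ g k ∨ g k ⊆ g i) : ∃ j, ∀ i, g j ⊆ g i := by
  classical
  obtain ⟨t, ht, hmin⟩ := (Finset.univ.image g).exists_minimal
    ⟨g (Classical.arbitrary _), Finset.mem_image_of_mem g (Finset.mem_univ _)⟩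
  obtain ⟨j, _, rfl⟩ := Finset.mem_image.mp ht
  refine ⟨j, fun i => ?_⟩
  rcases hcomp j i with h | h
  · exact h
  · have : ¬ g i < g j := fun hlt => (ne_of_lt hlt)
      (le_antisymm hlt.le (hmin (Finset.mem_image_of_mem g (Finset.mem_univ i)) hlt.le))
    rcases (lt_or_eq_of_le h) with h' | h'
    · exact absurd h' this
    · exact h'.ge

/-- **Lemma.** If a probability measure `P` on `ℝⁿ` with marginals `μ₁,…,μ_n` is
concentrated on a monotone Borel set (a set on which the coordinatewise order is total),
then `P` equals the quantile coupling `π*_n`. -/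
theorem statement5
    {n : ℕ} (μ : Fin n → Measure ℝ) [∀ i, IsProbabilityMeasure (μ i)]
    (P : Measure (Fin n → ℝ)) [IsProbabilityMeasure P]
    (hmarg : ∀ i, P.map (fun z => z i) = μ i)
    (M : Set (Fin n → ℝ)) (hM : MeasurableSet M)
    (hmono : ∀ x ∈ M, ∀ y ∈ M, x ≤ y ∨ y ≤ x)
    (hPM : P M = 1) :
    P = quantileCoupling μ := by
  classical
  -- a.e.-measurability of the quantile map
  have hf : AEMeasurable (fun x i => quantile (μ i) x)
      ((volume : Measure ℝ).restrict (Set.Ioo 0 1)) := by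
    have h : ∀ i, AEMeasurable (quantile (μ i)) ((volume : Measure ℝ).restrict (Set.Ioo 0 1)) :=
      fun i => aemeasurable_restrict_of_monotoneOn measurableSet_Ioo quantile_monotoneOn
    refine ⟨fun x i => (h i).mk _ x, measurable_pi_lambda _ (fun i => (h i).measurable_mk), ?_⟩
    have := ae_all_iff.mpr (fun i => (h i).ae_eq_mk)
    filter_upwards [this] with x hx
    funext i
    exact hx i
  have hPMc : P Mᶜ = 0 := by
    have := measure_compl hM (measure_ne_top P M)
    rw [hPM, measure_univ] at this
    simpa using this
  -- the π-system of lower boxes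
  set C : Set (Set (Fin n → ℝ)) :=
    Set.pi Set.univ '' Set.pi Set.univ (fun _ : Fin n => Set.range Set.Iic) with hC
  have hCpi : IsPiSystem C := by
    rintro _ ⟨t1, h1, rfl⟩ _ ⟨t2, h2, rfl⟩ -
    refine ⟨fun i => t1 i ∩ t2 i, fun i _ => ?_, ?_⟩
    · obtain ⟨b, hb⟩ := h1 i (Set.mem_univ i)
      obtain ⟨c, hc⟩ := h2 i (Set.mem_univ i)
      show t1 i ∩ t2 i ∈ Set.range Set.Iic
      rw [← hb, ← hc, Set.Iic_inter_Iic]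
      exact Set.mem_range_self _
    · rw [← Set.pi_inter_distrib]
  have hgen : (inferInstance : MeasurableSpace (Fin n → ℝ)) = MeasurableSpace.generateFrom C := by
    have h1 : (inferInstance : MeasurableSpace ℝ) =
        MeasurableSpace.generateFrom (Set.range Set.Iic) := by
      rw [BorelSpace.measurable_eq (α := ℝ), borel_eq_generateFrom_Iic]
    have hspan : ∀ _ : Fin n, IsCountablySpanning (Set.range (Set.Iic : ℝ → Set ℝ)) := by
      intro _
      refine ⟨fun k => Set.Iic (k : ℝ), fun k => Set.mem_range_self _, ?_⟩
      ext x
      obtain ⟨k, hk⟩ := exists_nat_ge x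
      simp only [Set.mem_iUnion, Set.mem_Iic, Set.mem_univ, iff_true]
      exact ⟨k, hk⟩
    calc (inferInstance : MeasurableSpace (Fin n → ℝ)) = MeasurableSpace.pi := rfl
      _ = MeasurableSpace.generateFrom C := by
          conv_lhs => rw [show (fun _ : Fin n => (inferInstance : MeasurableSpace ℝ)) =
            (fun _ : Fin n => MeasurableSpace.generateFrom (Set.range Set.Iic)) by
              funext i; exact h1]
          exact generateFrom_pi_eq hspan
  -- total mass of the coupling
  have hcoupl_univ : quantileCoupling μ Set.univ = 1 := by
    rw [quantileCoupling, Measure.map_apply_of_aemeasurable hf MeasurableSet.univ,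
      Set.preimage_univ, Measure.restrict_apply_univ, Real.volume_Ioo]
    norm_num
  refine ext_of_generate_finite C hgen hCpi ?_ (by rw [hcoupl_univ, measure_univ])
  rintro s ⟨t, ht, rfl⟩
  choose a ha using fun i => ht i (Set.mem_univ i)
  set A : Fin n → Set (Fin n → ℝ) := fun i => (fun z : Fin n → ℝ => z i) ⁻¹' Set.Iic (a i)
    with hA
  have hs_eq : Set.pi Set.univ t = ⋂ i, A i := by
    ext z
    simp only [Set.mem_pi, Set.mem_univ, forall_true_left, Set.mem_iInter, hA,
      Set.mem_preimage, Set.mem_Iic, ← ha]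
  rw [hs_eq]
  have hAmeas : ∀ i, MeasurableSet (A i) := fun i =>
    (measurable_pi_apply i) measurableSet_Iic
  have hPA : ∀ i, P (A i) = μ i (Set.Iic (a i)) := by
    intro i
    rw [← hmarg i, Measure.map_apply (measurable_pi_apply i) measurableSet_Iic]
  rcases isEmpty_or_nonempty (Fin n) with hemp | hne
  · rw [Set.iInter_of_empty, measure_univ, hcoupl_univ]
  -- comparability of the sets `M ∩ A i`
  have hcomp : ∀ i k, M ∩ A i ⊆ M ∩ A k ∨ M ∩ A k ⊆ M ∩ A i := by
    intro i k
    by_contra hcon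
    push_neg at hcon
    obtain ⟨h1, h2⟩ := hcon
    rw [Set.not_subset] at h1 h2
    obtain ⟨x, hx, hxk⟩ := h1
    obtain ⟨y, hy, hyi⟩ := h2
    rcases hmono x hx.1 y hy.1 with hxy | hyx
    · exact hxk ⟨hx.1, Set.mem_preimage.mpr (Set.mem_Iic.mpr
        (le_trans (hxy k) (Set.mem_Iic.mp (Set.mem_preimage.mp hy.2))))⟩
    · exact hyi ⟨hy.1, Set.mem_preimage.mpr (Set.mem_Iic.mpr
        (le_trans (hyx i) (Set.mem_Iic.mp (Set.mem_preimage.mp hx.2))))⟩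
  obtain ⟨j, hj⟩ := exists_subset_all (fun i => M ∩ A i) hcomp
  have hMiInter : M ∩ ⋂ i, A i = M ∩ A j := by
    apply subset_antisymm
    · exact fun z hz => ⟨hz.1, Set.mem_iInter.mp hz.2 j⟩
    · exact fun z hz => ⟨hz.1, Set.mem_iInter.mpr fun i => (hj i hz).2⟩
  have hPinter : P (⋂ i, A i) = P (A j) := by
    calc P (⋂ i, A i) = P ((⋂ i, A i) ∩ M) := (measure_inter_conull hPMc).symm
      _ = P (A j ∩ M) := by rw [Set.inter_comm, hMiInter, Set.inter_comm]
      _ = P (A j) := measure_inter_conull hPMc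
  have hmin : ∀ i, P (A j) ≤ P (A i) := by
    intro i
    calc P (A j) = P (A j ∩ M) := (measure_inter_conull hPMc).symm
      _ ≤ P (A i ∩ M) := measure_mono (by
          rw [Set.inter_comm, Set.inter_comm (A i)]; exact hj i)
      _ ≤ P (A i) := measure_mono Set.inter_subset_left
  -- compute the quantile-coupling side
  set c : ℝ := (μ j (Set.Iic (a j))).toReal with hc
  have hc0 : (0:ℝ) ≤ c := ENNReal.toReal_nonneg
  have hc1 : c ≤ 1 := by
    have h := prob_le_one (μ := μ j) (s := Set.Iic (a j))
    have := ENNReal.toReal_mono ENNReal.one_ne_top h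
    simpa using this
  have hset : (fun x i => quantile (μ i) x) ⁻¹' (⋂ i, A i) ∩ Set.Ioo (0:ℝ) 1
      = Set.Iic c ∩ Set.Ioo 0 1 := by
    ext x
    simp only [Set.mem_inter_iff, Set.mem_preimage, Set.mem_iInter, hA, Set.mem_Iic]
    constructor
    · rintro ⟨hq, hx⟩
      exact ⟨(quantile_le_iff hx (a j)).mp (hq j), hx⟩
    · rintro ⟨hxc, hx⟩
      refine ⟨fun i => (quantile_le_iff hx (a i)).mpr ?_, hx⟩
      have hle : (μ j (Set.Iic (a j))).toReal ≤ (μ i (Set.Iic (a i))).toReal :=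
        ENNReal.toReal_mono (measure_ne_top _ _) (by rw [← hPA i, ← hPA j]; exact hmin i)
      exact le_trans hxc hle
  have hvol : (volume : Measure ℝ) (Set.Iic c ∩ Set.Ioo 0 1) = ENNReal.ofReal c := by
    rcases lt_or_eq_of_le hc1 with h1 | h1
    · have : Set.Iic c ∩ Set.Ioo (0:ℝ) 1 = Set.Ioc 0 c := by
        ext x
        simp only [Set.mem_inter_iff, Set.mem_Iic, Set.mem_Ioo, Set.mem_Ioc]
        exact ⟨fun ⟨h, h', _⟩ => ⟨h', h⟩, fun ⟨h', h⟩ => ⟨h, h', lt_of_le_of_lt h h1⟩⟩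
      rw [this, Real.volume_Ioc, sub_zero]
    · have : Set.Iic c ∩ Set.Ioo (0:ℝ) 1 = Set.Ioo 0 1 := by
        ext x
        simp only [Set.mem_inter_iff, Set.mem_Iic, Set.mem_Ioo]
        exact ⟨fun ⟨_, h⟩ => h, fun h => ⟨h1 ▸ h.2.le, h⟩⟩
      rw [this, Real.volume_Ioo, sub_zero, h1]
  have hRHS : quantileCoupling μ (⋂ i, A i) = ENNReal.ofReal c := by
    rw [quantileCoupling, Measure.map_apply_of_aemeasurable hf (MeasurableSet.iInter hAmeas),
      Measure.restrict_apply' measurableSet_Ioo, hset, hvol]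
  rw [hRHS, hPinter, hPA j, ← ENNReal.ofReal_toReal (measure_ne_top (μ j) _)]
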